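/- Preservation of max-in-max under DAIM: if the initial matching μ fed into DAIM is max-in-max and complies with eligibility requirements, then the output μ' is also max-in-max; in particular, for every category c the number of beneficiaries of c matched to c under μ' is at least that under μ. -/

import Mathlib

open scoped Classical

variable {ι κ : Type*} [Fintype ι] [Fintype κ]

/-- Number of patients matched to category `c` under matching `μ`. -/
noncomputable def matchCount (μ : ι → Option κ) (c : κ) : ℕ :=
  (Finset.univ.filter fun i => μ i = some c).card

/-- Number of matched patients under `μ`. -/
noncomputable def matchedCard (μ : ι → Option κ) : ℕ :=
  (Finset.univ.filter fun i => μ i ≠ none).card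

/-- Number of patients matched to a category of which they are a beneficiary. -/
noncomputable def benefCard (B : κ → Finset ι) (μ : ι → Option κ) : ℕ :=
  (Finset.univ.filter fun i => ∃ c, μ i = some c ∧ i ∈ B c).card

/-- `μ` respects the capacity (reserve) of every category. -/
def Caps (r : κ → ℕ) (μ : ι → Option κ) : Prop :=
  ∀ c, matchCount μ c ≤ r c

/-- `μ` complies with eligibility requirements. -/
def Complies (E : κ → Finset ι) (μ : ι → Option κ) : Prop :=
  ∀ i c, μ i = some c → i ∈ E c

/-- `μ` is a feasible eligibility-complying matching. -/
def Valid (r : κ → ℕ) (E : κ → Finset ι) (μ : ι → Option κ) : Prop :=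
  Caps r μ ∧ Complies E μ

/-- `μ` is maximal in resource allocation. -/
def MaxRes (r : κ → ℕ) (E : κ → Finset ι) (μ : ι → Option κ) : Prop :=
  Valid r E μ ∧ ∀ μ', Valid r E μ' → matchedCard μ' ≤ matchedCard μ

/-- `μ` is max-in-max: maximal in resource allocation and maximizing beneficiary
assignments among such matchings. -/
def MaxInMax (r : κ → ℕ) (E B : κ → Finset ι) (μ : ι → Option κ) : Prop :=
  MaxRes r E μ ∧ ∀ μ', MaxRes r E μ' → benefCard B μ' ≤ benefCard B μ
/-- Eligible patients of category `c`: those strictly above the eligibility threshold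
`η c` in the priority order (encoded by the rank function `πr c`, lower rank = higher
priority). -/
noncomputable def Elig (πr : κ → ι → ℕ) (η : κ → ℕ) (c : κ) : Finset ι :=
  Finset.univ.filter fun i => πr c i < η c

/-- Beneficiaries of category `c`: those strictly above the beneficiary threshold. -/
noncomputable def Benef (πr : κ → ι → ℕ) (β : κ → ℕ) (c : κ) : Finset ι :=
  Finset.univ.filter fun i => πr c i < β c

/-- Preference rank of category `c` for patient `i` in the hypothetical market built
from the initial matching `μ` and the precedence order `prec`: a patient ranks first the
category she is initially matched to, and the remaining categories by precedence. -/
noncomputable def prank (prec : κ → ℕ) (μ : ι → Option κ) (i : ι) (c : κ) : ℕ :=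
  if μ i = some c then 0 else prec c + 1

/-- `μ'` is a stable matching of the hypothetical two-sided market associated with the
initial matching `μ`: it is feasible, individually rational, and admits no blocking
pair. -/
def Stable (r : κ → ℕ) (πr : κ → ι → ℕ) (η : κ → ℕ) (prec : κ → ℕ)
    (μ μ' : ι → Option κ) : Prop :=
  Caps r μ' ∧ Complies (Elig πr η) μ' ∧
  ¬ ∃ i c, i ∈ Elig πr η c ∧
      (μ' i = none ∨ ∃ c', μ' i = some c' ∧ prank prec μ i c < prank prec μ i c') ∧
      (matchCount μ' c < r c ∨ ∃ j, μ' j = some c ∧ πr c i < πr c j)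

/-- `μ'` is the output of patient-proposing Deferred Acceptance with Initial Matching
`μ`: the patient-optimal stable matching of the hypothetical market. -/
def DAIMOutput (r : κ → ℕ) (πr : κ → ι → ℕ) (η : κ → ℕ) (prec : κ → ℕ)
    (μ μ' : ι → Option κ) : Prop :=
  Stable r πr η prec μ μ' ∧
  ∀ μ'', Stable r πr η prec μ μ'' →
    ∀ i c₂, μ'' i = some c₂ →
      ∃ c₁, μ' i = some c₁ ∧ prank prec μ i c₁ ≤ prank prec μ i c₂
lemma matchedCard_eq_sum (μ : ι → Option κ) : matchedCard μ = ∑ c, matchCount μ c := by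
  unfold matchedCard matchCount
  simp only [Finset.card_filter]
  rw [Finset.sum_comm]
  refine Finset.sum_congr rfl fun i _ => ?_
  cases h : μ i with
  | none => simp [h]
  | some c0 => simp [h, eq_comm (a := c0)]

lemma benefCard_eq_sum (B : κ → Finset ι) (μ : ι → Option κ) :
    benefCard B μ = ∑ c, (Finset.univ.filter fun i => i ∈ B c ∧ μ i = some c).card := by
  unfold benefCard
  simp only [Finset.card_filter]
  rw [Finset.sum_comm]
  refine Finset.sum_congr rfl fun i _ => ?_
  cases h : μ i with
  | none => simp [h]
  | some c0 =>
    by_cases hb : i ∈ B c0 <;> simp only [h, hb, Option.some_inj, true_and, and_true,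
      exists_eq_left', if_true, if_false, eq_comm (a := c0)]
    · rw [if_pos ⟨c0, rfl, hb⟩, eq_comm, Finset.sum_eq_single c0]
      · simp [hb]
      · intro b _ hbne; simp [hbne]
      · simp
    · rw [if_neg (by rintro ⟨c, rfl, hc⟩; exact hb hc), eq_comm, Finset.sum_eq_zero]
      intro b _
      by_cases e : b = c0
      · subst e; simp [hb]
      · simp [e]

/-- Key lemma: under a stable matching of the hypothetical market, for any category
and any rank threshold, the number of patients above the threshold matched to the
category does not decrease. -/
lemma key_threshold (r : κ → ℕ) (πr : κ → ι → ℕ) (η : κ → ℕ) (prec : κ → ℕ)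
    (hπ : ∀ c, Function.Injective (πr c)) (μ μ' : ι → Option κ)
    (hS : Stable r πr η prec μ μ') (hcomp : Complies (Elig πr η) μ)
    (hcap : Caps r μ) (c : κ) (t : ℕ) :
    (Finset.univ.filter fun j => πr c j < t ∧ μ j = some c).card ≤
      (Finset.univ.filter fun j => πr c j < t ∧ μ' j = some c).card := by
  by_cases hsub : ∀ j, πr c j < t → μ j = some c → μ' j = some c
  · apply Finset.card_le_card
    intro j hj
    simp only [Finset.mem_filter, Finset.mem_univ, true_and] at hj ⊢
    exact ⟨hj.1, hsub j hj.1 hj.2⟩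
  · push_neg at hsub
    obtain ⟨j, hjt, hjμ, hjμ'⟩ := hsub
    have hel : j ∈ Elig πr η c := hcomp j c hjμ
    have hpref : μ' j = none ∨ ∃ c', μ' j = some c' ∧
        prank prec μ j c < prank prec μ j c' := by
      cases h : μ' j with
      | none => exact Or.inl rfl
      | some c' =>
        refine Or.inr ⟨c', rfl, ?_⟩
        have hne : ¬ (μ j = some c') := by
          intro e; rw [hjμ] at e; exact hjμ' (by rw [h, ← Option.some_inj.mp e])
        have hcc : c ≠ c' := fun e => hne (e ▸ hjμ)
        simp [prank, hjμ, hne, hcc]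
    have hnb : ¬(matchCount μ' c < r c ∨ ∃ k, μ' k = some c ∧ πr c j < πr c k) :=
      fun h => hS.2.2 ⟨j, c, hel, hpref, h⟩
    push_neg at hnb
    obtain ⟨hfull, hrank⟩ := hnb
    have hsub2 : (Finset.univ.filter fun k => μ' k = some c) ⊆
        Finset.univ.filter fun k => πr c k < t ∧ μ' k = some c := by
      intro k hk
      simp only [Finset.mem_filter, Finset.mem_univ, true_and] at hk ⊢
      refine ⟨lt_trans ?_ hjt, hk⟩
      rcases lt_or_eq_of_le (hrank k hk) with h | h
      · exact h
      · exact absurd (by rwa [hπ c h] at hk : μ' j = some c) hjμ'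
    calc (Finset.univ.filter fun j => πr c j < t ∧ μ j = some c).card
        ≤ matchCount μ c := Finset.card_le_card (by intro k hk; simp only [Finset.mem_filter, Finset.mem_univ, true_and] at hk ⊢; exact hk.2)
      _ ≤ r c := hcap c
      _ ≤ matchCount μ' c := hfull
      _ ≤ _ := Finset.card_le_card hsub2

/-- Preservation of max-in-max under DAIM: if the initial matching is max-in-max (and
eligibility-complying), so is the DAIM output; in particular, in every category the
number of beneficiaries of that category matched to it does not decrease. -/
theorem daim_preserves_maxInMax (r : κ → ℕ) (πr : κ → ι → ℕ) (η β : κ → ℕ)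
    (hβη : ∀ c, β c ≤ η c) (prec : κ → ℕ)
    (hprec : Function.Injective prec) (hπ : ∀ c, Function.Injective (πr c))
    (μ μ' : ι → Option κ)
    (hμ : MaxInMax r (Elig πr η) (Benef πr β) μ)
    (hout : DAIMOutput r πr η prec μ μ') :
    MaxInMax r (Elig πr η) (Benef πr β) μ' ∧
    ∀ c, (Finset.univ.filter fun j => j ∈ Benef πr β c ∧ μ j = some c).card ≤
      (Finset.univ.filter fun j => j ∈ Benef πr β c ∧ μ' j = some c).card := by
  obtain ⟨⟨⟨hcapμ, hcompμ⟩, hmaxres⟩, hmaxben⟩ := hμ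
  obtain ⟨hS, -⟩ := hout
  have hcapμ' := hS.1
  have hcompμ' := hS.2.1
  have key := key_threshold r πr η prec hπ μ μ' hS hcompμ hcapμ
  -- part 2 of the conclusion
  have part2 : ∀ c, (Finset.univ.filter fun j => j ∈ Benef πr β c ∧ μ j = some c).card ≤
      (Finset.univ.filter fun j => j ∈ Benef πr β c ∧ μ' j = some c).card := by
    intro c
    simpa only [Benef, Finset.mem_filter, Finset.mem_univ, true_and] using key c (β c)
  -- matchCount comparison
  have hmc : ∀ c, matchCount μ c ≤ matchCount μ' c := by
    intro c
    have ht : ∀ j : ι, πr c j < Finset.univ.sup (πr c) + 1 := fun j =>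
      Nat.lt_succ_of_le (Finset.le_sup (Finset.mem_univ j))
    have h := key c (Finset.univ.sup (πr c) + 1)
    unfold matchCount
    have e1 : (Finset.univ.filter fun j => μ j = some c) =
        Finset.univ.filter fun j => πr c j < Finset.univ.sup (πr c) + 1 ∧ μ j = some c := by
      ext j; simp only [Finset.mem_filter, Finset.mem_univ, true_and, ht j]
    have e2 : (Finset.univ.filter fun j => μ' j = some c) =
        Finset.univ.filter fun j => πr c j < Finset.univ.sup (πr c) + 1 ∧ μ' j = some c := by
      ext j; simp only [Finset.mem_filter, Finset.mem_univ, true_and, ht j]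
    rw [e1, e2]; exact h
  have hvalid' : Valid r (Elig πr η) μ' := ⟨hcapμ', hcompμ'⟩
  have hmle : matchedCard μ ≤ matchedCard μ' := by
    rw [matchedCard_eq_sum, matchedCard_eq_sum]
    exact Finset.sum_le_sum fun c _ => hmc c
  have hmaxres' : MaxRes r (Elig πr η) μ' :=
    ⟨hvalid', fun μ'' h => le_trans (hmaxres μ'' h) hmle⟩
  have hbenle : benefCard (Benef πr β) μ ≤ benefCard (Benef πr β) μ' := by
    rw [benefCard_eq_sum, benefCard_eq_sum]
    exact Finset.sum_le_sum fun c _ => part2 c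
  exact ⟨⟨hmaxres', fun μ'' h => le_trans (hmaxben μ'' h) hbenle⟩, part2⟩
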